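/- Let n ≥ 1, let ℓ > 0, c > 0, and let F = diag(f₁, …, fₙ) be a real diagonal matrix with fᵢ > 0 for all i. Let a₁², …, aₙ² denote the eigenvalues, listed with multiplicity, of the symmetric positive definite matrix Iₙ + √F·B·√F (these are positive reals), and set a₀ = 1. Then the characteristic polynomial of A₀ satisfies det(s·I_{3n+2} − A₀) = sⁿ · ∏_{k=0}^{n} (s² + ω₀²·a_k²). -/

import Mathlib

open Matrix Polynomial

noncomputable section

/-- The `n × n` tridiagonal matrix `B` of the Marx generator. -/
def marxB (n : ℕ) : Matrix (Fin n) (Fin n) ℝ :=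
  Matrix.of fun i j =>
    if i = j then (if (i : ℕ) = n - 1 then ((n : ℝ) + 1) / n else 2)
    else if (i : ℕ) + 1 = (j : ℕ) ∨ (j : ℕ) + 1 = (i : ℕ) then -1 else 0

/-- The `n × (n+1)` difference matrix `Σ`. -/
def marxSigma (n : ℕ) : Matrix (Fin n) (Fin (n + 1)) ℝ :=
  Matrix.of fun i j =>
    if (j : ℕ) = (i : ℕ) then 1 else if (j : ℕ) = (i : ℕ) + 1 then -1 else 0

/-- `J_{n+1} = diag(1, …, 1, n)`. -/
def marxJ (n : ℕ) : Matrix (Fin (n + 1)) (Fin (n + 1)) ℝ :=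
  Matrix.diagonal fun j => if (j : ℕ) = n then (n : ℝ) else 1

/-- `J_{-1} = diag(1, …, 1, -1)` of size `n+1`. -/
def marxJm (n : ℕ) : Matrix (Fin (n + 1)) (Fin (n + 1)) ℝ :=
  Matrix.diagonal fun j => if (j : ℕ) = n then (-1 : ℝ) else 1

/-- The `(3n+2) × (3n+2)` state transition matrix `A₀` of the Marx circuit,
indexed by `(Fin n ⊕ Fin (n+1)) ⊕ Fin (n+1)`, the `2n+1` voltages followed by
the `n+1` currents. -/
def marxA0 (n : ℕ) (ℓ c : ℝ) (f : Fin n → ℝ) :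
    Matrix ((Fin n ⊕ Fin (n + 1)) ⊕ Fin (n + 1))
      ((Fin n ⊕ Fin (n + 1)) ⊕ Fin (n + 1)) ℝ :=
  Matrix.fromBlocks 0
    (Matrix.fromRows (-(1 / c) • (Matrix.diagonal f * marxSigma n * marxJm n))
      ((1 / c) • (1 : Matrix (Fin (n + 1)) (Fin (n + 1)) ℝ)))
    (Matrix.fromCols ((1 / ℓ) • ((marxJ n)⁻¹ * marxJm n * (marxSigma n)ᵀ))
      (-(1 / ℓ) • (1 : Matrix (Fin (n + 1)) (Fin (n + 1)) ℝ)))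
    0


lemma marx_eval_charpoly {m : Type*} [Fintype m] [DecidableEq m] (M : Matrix m m ℝ) (x : ℝ) :
    M.charpoly.eval x = (x • (1 : Matrix m m ℝ) - M).det := by
  have : M.charpoly.eval x = (Polynomial.evalRingHom x) (M.charmatrix).det := rfl
  rw [this, RingHom.map_det]
  congr 1
  ext i j
  by_cases h : i = j
  · subst h; simp [charmatrix_apply_eq, Matrix.one_apply]
  · simp [charmatrix_apply_ne _ _ _ h, Matrix.one_apply_ne h]

lemma marx_w_spec (n : ℕ) (hn : 1 ≤ n) :
    marxSigma n * Matrix.diagonal (fun j : Fin (n+1) => if (j:ℕ) = n then ((n:ℝ))⁻¹ else 1) *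
      (marxSigma n)ᵀ = marxB n := by
  ext i j
  rw [Matrix.mul_apply]
  simp only [Matrix.mul_diagonal, Matrix.transpose_apply]
  have hi : (i:ℕ) < n := i.isLt
  have hj : (j:ℕ) < n := j.isLt
  have hn0 : (n:ℝ) ≠ 0 := Nat.cast_ne_zero.mpr (by omega)
  rw [← Finset.sum_subset (Finset.subset_univ {(i : Fin n).castSucc, (i : Fin n).succ})
    (by
      intro k _ hk
      simp only [Finset.mem_insert, Finset.mem_singleton] at hk
      push_neg at hk
      obtain ⟨h1, h2⟩ := hk
      have hk1 : (k:ℕ) ≠ (i:ℕ) := by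
        intro h; exact h1 (Fin.ext (by simpa using h))
      have hk2 : (k:ℕ) ≠ (i:ℕ) + 1 := by
        intro h; exact h2 (Fin.ext (by simpa using h))
      simp [marxSigma, hk1, hk2])]
  rw [Finset.sum_pair (by
    intro h
    have := congrArg Fin.val h
    simp at this)]
  simp only [marxSigma, marxB, Matrix.of_apply, Fin.coe_castSucc, Fin.val_succ, Fin.ext_iff]
  split_ifs
  all_goals try (exfalso; omega)
  all_goals try norm_num
  all_goals simp [eq_div_iff hn0, add_mul, inv_mul_cancel₀ hn0]

lemma marx_J_inv (n : ℕ) (hn : 1 ≤ n) :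
    (marxJ n)⁻¹ =
      Matrix.diagonal (fun j : Fin (n+1) => if (j:ℕ) = n then ((n:ℝ))⁻¹ else 1) := by
  have hn0 : (n:ℝ) ≠ 0 := Nat.cast_ne_zero.mpr (by omega)
  apply Matrix.inv_eq_right_inv
  rw [marxJ, Matrix.diagonal_mul_diagonal, ← Matrix.diagonal_one]
  refine congrArg Matrix.diagonal (funext fun j => ?_)
  split_ifs with h
  · exact mul_inv_cancel₀ hn0
  · exact one_mul 1

lemma marx_Jm_conj (n : ℕ) :
    marxJm n *
      Matrix.diagonal (fun j : Fin (n+1) => if (j:ℕ) = n then ((n:ℝ))⁻¹ else 1) * marxJm n =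
      Matrix.diagonal (fun j : Fin (n+1) => if (j:ℕ) = n then ((n:ℝ))⁻¹ else 1) := by
  rw [marxJm, Matrix.diagonal_mul_diagonal, Matrix.diagonal_mul_diagonal]
  refine congrArg Matrix.diagonal (funext fun j => ?_)
  split_ifs <;> ring

/-- Lemma 3 of the paper: if `a₁², …, aₙ²` are the eigenvalues
(with multiplicity) of the symmetric positive definite matrix `I + √F·B·√F`,
and `a₀ = 1`, then the characteristic polynomial of `A₀` is
`sⁿ · ∏_{k=0}^{n} (s² + ω₀²·aₖ²)`, where `ω₀ = 1/√(ℓc)`. -/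
theorem statement6 (n : ℕ) (hn : 1 ≤ n) (ℓ c : ℝ) (hℓ : 0 < ℓ) (hc : 0 < c)
    (f : Fin n → ℝ) (hf : ∀ i, 0 < f i)
    (ω₀ : ℝ) (hω₀ : ω₀ = 1 / Real.sqrt (ℓ * c))
    (a : Fin n → ℝ) (ha : ∀ i, 0 < a i)
    (heig : (1 + Matrix.diagonal (fun i => Real.sqrt (f i)) * marxB n *
        Matrix.diagonal (fun i => Real.sqrt (f i))).charpoly =
      ∏ i, (Polynomial.X - Polynomial.C ((a i) ^ 2))) :
    (marxA0 n ℓ c f).charpoly =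
      Polynomial.X ^ n * (Polynomial.X ^ 2 + Polynomial.C (ω₀ ^ 2)) *
        ∏ i, (Polynomial.X ^ 2 + Polynomial.C (ω₀ ^ 2 * (a i) ^ 2)) := by
  have hω2 : ω₀ ^ 2 = 1 / (ℓ * c) := by
    rw [hω₀, div_pow, one_pow, Real.sq_sqrt (mul_pos hℓ hc).le]
  have hωpos : 0 < ω₀ ^ 2 := by rw [hω2]; positivity
  -- notation
  set G : Matrix (Fin n) (Fin n) ℝ := Matrix.diagonal (fun i => Real.sqrt (f i)) with hG
  set w : Fin (n+1) → ℝ := fun j => if (j:ℕ) = n then ((n:ℝ))⁻¹ else 1 with hw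
  set Sg := marxSigma n with hSg
  set Jm := marxJm n with hJm
  set U : Matrix (Fin (n+1)) (Fin n) ℝ := (marxJ n)⁻¹ * Jm * Sgᵀ * G with hU
  set V : Matrix (Fin n) (Fin (n+1)) ℝ := G * Sg * Jm with hV
  have hGG : G * G = Matrix.diagonal f := by
    rw [hG, Matrix.diagonal_mul_diagonal]
    exact congrArg Matrix.diagonal (funext fun i => Real.mul_self_sqrt (hf i).le)
  have hUV : U * V = (marxJ n)⁻¹ * Jm * Sgᵀ * (Matrix.diagonal f * Sg * Jm) := by
    rw [hU, hV]
    simp only [Matrix.mul_assoc]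
    rw [← Matrix.mul_assoc G G, hGG]
  have hVU : V * U = G * marxB n * G := by
    rw [hU, hV, marx_J_inv n hn, ← hw]
    simp only [Matrix.mul_assoc]
    rw [← Matrix.mul_assoc Jm (Matrix.diagonal w) (Jm * (Sgᵀ * G)),
      ← Matrix.mul_assoc (Jm * Matrix.diagonal w) Jm (Sgᵀ * G), hJm, marx_Jm_conj n, ← hw,
      ← Matrix.mul_assoc Sg (Matrix.diagonal w) (Sgᵀ * G),
      ← Matrix.mul_assoc (Sg * Matrix.diagonal w) Sgᵀ G, hSg, marx_w_spec n hn]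
  -- reduce to evaluation at all nonzero reals
  refine Polynomial.eq_of_infinite_eval_eq _ _
    (Set.Infinite.mono ?_ ((Set.finite_singleton (0:ℝ)).infinite_compl))
  intro s hs
  simp only [Set.mem_compl_iff, Set.mem_singleton_iff] at hs
  simp only [Set.mem_setOf_eq]
  -- abbreviations
  set u : ℝ := s ^ 2 + ω₀ ^ 2 with hu
  have hupos : 0 < u := by positivity
  have hune : u ≠ 0 := hupos.ne'
  set t : ℝ := ω₀ ^ 2 / u with ht
  have htne : t ≠ 0 := div_ne_zero hωpos.ne' hune
  have hut : u * t = ω₀ ^ 2 := by rw [ht]; field_simp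
  set x : ℝ := (t - 1) / t with hx
  -- right hand side evaluation
  have hRHS : Polynomial.eval s (Polynomial.X ^ n * (Polynomial.X ^ 2 + Polynomial.C (ω₀ ^ 2)) *
        ∏ i, (Polynomial.X ^ 2 + Polynomial.C (ω₀ ^ 2 * (a i) ^ 2)))
      = s ^ n * u * ∏ i, (s ^ 2 + ω₀ ^ 2 * (a i) ^ 2) := by
    simp [Polynomial.eval_prod, hu, mul_assoc]
  rw [hRHS, marx_eval_charpoly]
  -- block structure
  set R1 : Matrix (Fin n) (Fin (n+1)) ℝ := -(1 / c) • (Matrix.diagonal f * Sg * Jm) with hR1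
  set R2 : Matrix (Fin (n+1)) (Fin (n+1)) ℝ := (1 / c) • 1 with hR2
  set L1 : Matrix (Fin (n+1)) (Fin n) ℝ := (1 / ℓ) • ((marxJ n)⁻¹ * Jm * Sgᵀ) with hL1
  set L2 : Matrix (Fin (n+1)) (Fin (n+1)) ℝ := -(1 / ℓ) • 1 with hL2
  set RR := Matrix.fromRows R1 R2 with hRR
  set LL := Matrix.fromCols L1 L2 with hLL
  have hA : s • (1 : Matrix ((Fin n ⊕ Fin (n+1)) ⊕ Fin (n+1)) _ ℝ) - marxA0 n ℓ c f
      = Matrix.fromBlocks (s • 1) (-RR) (-LL) (s • 1) := by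
    rw [marxA0, ← Matrix.fromBlocks_one, Matrix.fromBlocks_smul, sub_eq_add_neg,
      Matrix.fromBlocks_neg, Matrix.fromBlocks_add]
    simp [hRR, hLL, hR1, hR2, hL1, hL2, one_div, hSg, hJm]
  rw [hA]
  haveI : Invertible (s • (1 : Matrix (Fin n ⊕ Fin (n+1)) _ ℝ)) :=
    ⟨s⁻¹ • 1, by rw [Matrix.smul_mul, Matrix.one_mul, smul_smul, inv_mul_cancel₀ hs, one_smul],
      by rw [Matrix.smul_mul, Matrix.one_mul, smul_smul, mul_inv_cancel₀ hs, one_smul]⟩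
  rw [Matrix.det_fromBlocks₁₁]
  have hinv : ⅟(s • (1 : Matrix (Fin n ⊕ Fin (n+1)) _ ℝ)) = s⁻¹ • 1 :=
    invOf_eq_right_inv
      (by rw [Matrix.smul_mul, Matrix.one_mul, smul_smul, mul_inv_cancel₀ hs, one_smul])
  rw [hinv]
  have hdet1 : (s • (1 : Matrix (Fin n ⊕ Fin (n+1)) _ ℝ)).det = s ^ (n + (n + 1)) := by
    rw [Matrix.det_smul, Matrix.det_one, mul_one, Fintype.card_sum, Fintype.card_fin,
      Fintype.card_fin]
  rw [hdet1]
  -- the product LL * RR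
  have hLR : LL * RR = (-(ω₀ ^ 2)) • (U * V + 1) := by
    rw [hLL, hRR, Matrix.fromCols_mul_fromRows, hL1, hR1, hL2, hR2, hUV]
    rw [Matrix.smul_mul, Matrix.mul_smul, Matrix.smul_mul, Matrix.mul_smul, Matrix.one_mul,
      smul_smul, smul_smul, smul_add]
    congr 1
    · rw [← Matrix.mul_assoc, ← Matrix.mul_assoc]
      congr 1
      rw [hω2]; field_simp
    · congr 1
      rw [hω2]; field_simp
  -- Schur complement block
  have hblock : s • (1 : Matrix (Fin (n+1)) (Fin (n+1)) ℝ) -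
      -LL * (s⁻¹ • (1 : Matrix (Fin n ⊕ Fin (n+1)) (Fin n ⊕ Fin (n+1)) ℝ)) * -RR
      = (s⁻¹ * u) • (1 + t • (U * V)) := by
    simp only [Matrix.neg_mul, Matrix.mul_neg, neg_neg, Matrix.mul_smul, Matrix.smul_mul,
      Matrix.mul_one]
    rw [hLR]
    match_scalars <;> simp only [ht, hu] <;> field_simp <;> try ring
  rw [hblock, Matrix.det_smul, Fintype.card_fin]
  have e1 : (1 : Matrix (Fin (n+1)) _ ℝ) + t • (U * V) = 1 + (t • U) * V := by
    rw [Matrix.smul_mul]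
  rw [e1, Matrix.det_one_add_mul_comm, Matrix.mul_smul, hVU]
  have e2 : (1 : Matrix (Fin n) _ ℝ) + t • (G * marxB n * G)
      = (-t) • (x • (1 : Matrix (Fin n) (Fin n) ℝ) - (1 + G * marxB n * G)) := by
    have hω0 : ω₀ ≠ 0 := fun h => by simp [h] at hωpos
    match_scalars <;> simp only [hx, ht, hu] <;> field_simp <;> try ring
  rw [e2, Matrix.det_smul, Fintype.card_fin, ← marx_eval_charpoly, heig]
  simp only [Polynomial.eval_prod, Polynomial.eval_sub, Polynomial.eval_pow, Polynomial.eval_X,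
    Polynomial.eval_C]
  have hprod : (-t) ^ n * ∏ i, (x - (a i) ^ 2) = ∏ i, ((1 - t) + t * (a i) ^ 2) := by
    rw [show ((-t : ℝ)) ^ n = ∏ _i : Fin n, (-t) by simp, ← Finset.prod_mul_distrib]
    refine Finset.prod_congr rfl fun i _ => ?_
    rw [hx]; field_simp; ring
  have hprod2 : u ^ n * ∏ i, ((1 - t) + t * (a i) ^ 2) = ∏ i, (s ^ 2 + ω₀ ^ 2 * (a i) ^ 2) := by
    rw [show (u : ℝ) ^ n = ∏ _i : Fin n, u by simp, ← Finset.prod_mul_distrib]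
    refine Finset.prod_congr rfl fun i _ => ?_
    rw [ht]; field_simp; ring
  calc s ^ (n + (n + 1)) * ((s⁻¹ * u) ^ (n + 1) * ((-t) ^ n * ∏ i, (x - (a i) ^ 2)))
      = (s ^ (n+1) * (s⁻¹) ^ (n+1)) * (s ^ n * u *
          (u ^ n * ((-t) ^ n * ∏ i, (x - (a i) ^ 2)))) := by
        rw [mul_pow, pow_add, pow_succ u]; ring
    _ = s ^ n * u * (u ^ n * ((-t) ^ n * ∏ i, (x - (a i) ^ 2))) := by
        rw [← mul_pow, mul_inv_cancel₀ hs, one_pow, one_mul]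
    _ = s ^ n * u * ∏ i, (s ^ 2 + ω₀ ^ 2 * (a i) ^ 2) := by
        rw [hprod, hprod2]

end
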